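/- If two non-abelian 3-cocycles (ω₁,θ₁,ρ₁) and (ω₂,θ₂,ρ₂) on g with values in h are equivalent via φ: g→h, then the map f: g⊕h → g⊕h defined by f(x+a)=x−φ(x)+a is an isomorphism of Lie triple systems from (g⊕h, [.,.,.]_{(ω₁,θ₁,ρ₁)}) to (g⊕h, [.,.,.]_{(ω₂,θ₂,ρ₂)}) that commutes with the inclusion of h and projection onto g. -/
import Mathlib


universe u v w

/-- A Lie triple system over a field `k`. -/
structure LTS (k : Type u) (V : Type v) [Field k] [AddCommGroup V] [Module k V] where
  t : V →ₗ[k] V →ₗ[k] V →ₗ[k] V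
  alt : ∀ x y, t x x y = 0
  cyc : ∀ x y z, t x y z + t y z x + t z x y = 0
  leib : ∀ a b x y z, t a b (t x y z) =
    t (t a b x) y z + t x (t a b y) z + t x y (t a b z)

/-- `D_θ(x,y) a = θ(y,x) a - θ(x,y) a`. -/
def Dmap {G H : Type*} [AddCommGroup H] (θ : G → G → H → H) (x y : G) (a : H) : H :=
  θ y x a - θ x y a

/-- `D_ρ(x)(a,b) = ρ(x)(b,a) - ρ(x)(a,b)`. -/
def Drho {G H : Type*} [AddCommGroup H] (ρ : G → H → H → H) (x : G) (a b : H) : H :=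
  ρ x b a - ρ x a b

/-- A non-abelian 3-cocycle on `g` with values in `h`: identities (3.2)–(3.14) of the paper,
together with the wedge conditions on `ω`, `θ`, `ρ`. -/
def IsNACocycle {G H : Type*} [AddCommGroup H]
    (tg : G → G → G → G) (th : H → H → H → H)
    (ω : G → G → G → H) (θ : G → G → H → H) (ρ : G → H → H → H) : Prop :=
  (∀ x y, ω x x y = 0) ∧
  (∀ x a, θ x x a = 0) ∧
  (∀ x a, ρ x a a = 0) ∧
  (∀ x y z, ω x y z + ω y z x + ω z x y = 0) ∧
  (∀ x1 x2 y1 y2 y3,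
    Dmap θ x1 x2 (ω y1 y2 y3) + ω x1 x2 (tg y1 y2 y3) =
      ω (tg x1 x2 y1) y2 y3 + θ y2 y3 (ω x1 x2 y1)
      + ω y1 (tg x1 x2 y2) y3 - θ y1 y3 (ω x1 x2 y2)
      + ω y1 y2 (tg x1 x2 y3) + Dmap θ y1 y2 (ω x1 x2 y3)) ∧
  (∀ x y z w a,
    Dmap θ x y (θ z w a) - θ z w (Dmap θ x y a) =
      θ (tg x y z) w a + θ z (tg x y w) a
      - Drho ρ w (ω x y z) a - ρ z a (ω x y w)) ∧
  (∀ x y z w a,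
    θ x (tg y z w) a - ρ x a (ω y z w) =
      θ z w (θ x y a) - θ y w (θ x z a) + Dmap θ y z (θ x w a)) ∧
  (∀ x y z a b,
    Dmap θ x y (ρ z a b) =
      ρ z (Dmap θ x y a) b + ρ (tg x y z) a b + th (ω x y z) a b
      + ρ z a (Dmap θ x y b)) ∧
  (∀ x y z a b,
    Dmap θ y z (ρ x a b) =
      ρ x a (Dmap θ y z b) - ρ z (θ x y a) b + ρ y (θ x z a) b) ∧
  (∀ x y z a b,
    θ y z (ρ x a b) =
      ρ x a (θ y z b) - Drho ρ z (θ x y a) b - ρ y b (θ x z a)) ∧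
  (∀ x y a b c,
    Dmap θ x y (th a b c) =
      th (Dmap θ x y a) b c + th a (Dmap θ x y b) c + th a b (Dmap θ x y c)) ∧
  (∀ x y a b c,
    ρ x a (ρ y b c) =
      ρ y (ρ x a b) c + ρ y b (ρ x a c) - th (θ x y a) b c) ∧
  (∀ x y a b c,
    th a b (θ x y c) =
      θ x y (th a b c) - Drho ρ y (Drho ρ x a b) c - ρ x c (Drho ρ y a b)) ∧
  (∀ x a b c d,
    th a b (ρ x c d) =
      ρ x (th a b c) d - th c (Drho ρ x a b) d + ρ x c (th a b d)) ∧
  (∀ x a b c d,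
    ρ x a (th b c d) =
      th (ρ x a b) c d + th b (ρ x a c) d + th b c (ρ x a d))

/-- The bracket `[x+a, y+b, z+c]_{(ω,θ,ρ)}` on `g ⊕ h`. -/
def nabBr {G H : Type*} [AddCommGroup H]
    (tg : G → G → G → G) (th : H → H → H → H)
    (ω : G → G → G → H) (θ : G → G → H → H) (ρ : G → H → H → H) :
    G × H → G × H → G × H → G × H :=
  fun p q r =>
    (tg p.1 q.1 r.1,
      ω p.1 q.1 r.1 + Dmap θ p.1 q.1 r.2 + θ q.1 r.1 p.2 - θ p.1 r.1 q.2
        + Drho ρ r.1 p.2 q.2 + ρ p.1 q.2 r.2 - ρ q.1 p.2 r.2 + th p.2 q.2 r.2)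

/-- Equivalence of two non-abelian 3-cocycles via `φ : g → h`
(equations (3.15)–(3.17) of the paper). -/
def CocycleEquiv {G H : Type*} [AddCommGroup H]
    (tg : G → G → G → G) (th : H → H → H → H)
    (ω1 : G → G → G → H) (θ1 : G → G → H → H) (ρ1 : G → H → H → H)
    (ω2 : G → G → G → H) (θ2 : G → G → H → H) (ρ2 : G → H → H → H)
    (φ : G → H) : Prop :=
  (∀ x y z,
    ω1 x y z - ω2 x y z =
      θ2 x z (φ y) - Dmap θ2 x y (φ z) + ρ2 x (φ y) (φ z) - θ2 y z (φ x)
        + Drho ρ2 z (φ x) (φ y) - ρ2 y (φ x) (φ z)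
        - th (φ x) (φ y) (φ z) + φ (tg x y z)) ∧
  (∀ x y a,
    θ1 x y a - θ2 x y a =
      ρ2 x a (φ y) - Drho ρ2 y a (φ x) + th a (φ x) (φ y)) ∧
  (∀ x a b, ρ1 x a b - ρ2 x a b = th a (φ x) b)

/-- The operation `i_f(g)` on degree-one cochains (from equations (4.2)–(4.4)). -/
def ibrack {M : Type*} [AddCommGroup M] (f g : M → M → M → M) :
    M → M → M → M → M → M :=
  fun x1 y1 x2 y2 z =>
    f (g x1 y1 x2) y2 z + f x2 (g x1 y1 y2) z
      - (f x1 y1 (g x2 y2 z) - f x2 y2 (g x1 y1 z))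

/-- The graded bracket `[f,g]_{Lts} = (-1)^{1·1} i_f(g) - i_g(f)` of two degree-one cochains. -/
def brLts {M : Type*} [AddCommGroup M] (f g : M → M → M → M) :
    M → M → M → M → M → M :=
  fun x1 y1 x2 y2 z =>
    -(ibrack f g x1 y1 x2 y2 z) - ibrack g f x1 y1 x2 y2 z

/-- Non-abelian 1-cocycles on `g` with values in `h`. -/
def IsZ1 {G H : Type*} [AddCommGroup H]
    (tg : G → G → G → G) (th : H → H → H → H)
    (θ : G → G → H → H) (ρ : G → H → H → H) (φ : G → H) : Prop :=
  (∀ x a b, th a (φ x) b = 0) ∧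
  (∀ x y a, th a (φ x) (φ y) - Drho ρ y a (φ x) + ρ x a (φ y) = 0) ∧
  (∀ x y z,
    Drho ρ z (φ x) (φ y) - ρ y (φ x) (φ z) - θ y z (φ x)
      + ρ x (φ y) (φ z) + θ x z (φ y) - Dmap θ x y (φ z)
      = th (φ x) (φ y) (φ z) - φ (tg x y z))

set_option maxHeartbeats 2000000 in
/-- if two non-abelian 3-cocycles are equivalent via `φ`, then
`f(x+a) = x - φ(x) + a` is an isomorphism of Lie triple systems from
`(g ⊕ h, [.,.,.]_{(ω₁,θ₁,ρ₁)})` to `(g ⊕ h, [.,.,.]_{(ω₂,θ₂,ρ₂)})` commuting with the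
inclusion of `h` and the projection onto `g`. -/
theorem statement7 {k G H : Type*} [Field k] [AddCommGroup G] [Module k G]
    [AddCommGroup H] [Module k H]
    (Lg : LTS k G) (Lh : LTS k H)
    (ω1 : G →ₗ[k] G →ₗ[k] G →ₗ[k] H) (θ1 : G →ₗ[k] G →ₗ[k] H →ₗ[k] H)
    (ρ1 : G →ₗ[k] H →ₗ[k] H →ₗ[k] H)
    (ω2 : G →ₗ[k] G →ₗ[k] G →ₗ[k] H) (θ2 : G →ₗ[k] G →ₗ[k] H →ₗ[k] H)
    (ρ2 : G →ₗ[k] H →ₗ[k] H →ₗ[k] H)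
    (hcoc1 : IsNACocycle (fun x y z => Lg.t x y z) (fun a b c => Lh.t a b c)
      (fun x y z => ω1 x y z) (fun x y a => θ1 x y a) (fun x a b => ρ1 x a b))
    (hcoc2 : IsNACocycle (fun x y z => Lg.t x y z) (fun a b c => Lh.t a b c)
      (fun x y z => ω2 x y z) (fun x y a => θ2 x y a) (fun x a b => ρ2 x a b))
    (φ : G →ₗ[k] H)
    (hequiv : CocycleEquiv (fun x y z => Lg.t x y z) (fun a b c => Lh.t a b c)
      (fun x y z => ω1 x y z) (fun x y a => θ1 x y a) (fun x a b => ρ1 x a b)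
      (fun x y z => ω2 x y z) (fun x y a => θ2 x y a) (fun x a b => ρ2 x a b)
      (fun x => φ x)) :
    ∀ B1 B2 : G × H → G × H → G × H → G × H,
      B1 = nabBr (fun x y z => Lg.t x y z) (fun a b c => Lh.t a b c)
        (fun x y z => ω1 x y z) (fun x y a => θ1 x y a) (fun x a b => ρ1 x a b) →
      B2 = nabBr (fun x y z => Lg.t x y z) (fun a b c => Lh.t a b c)
        (fun x y z => ω2 x y z) (fun x y a => θ2 x y a) (fun x a b => ρ2 x a b) →
      ∀ f : G × H → G × H, f = (fun q => (q.1, q.2 - φ q.1)) →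
        Function.Bijective f ∧
        (∀ q r u, f (B1 q r u) = B2 (f q) (f r) (f u)) ∧
        (∀ a : H, f (0, a) = (0, a)) ∧
        (∀ q, (f q).1 = q.1) := by
  obtain ⟨e1, e2, e3⟩ := hequiv
  intro B1 B2 hB1 hB2 f hf
  subst hB1 hB2 hf
  have E1 : ∀ x y z, ω1 x y z = ω2 x y z +
      (θ2 x z (φ y) - Dmap (fun x y a => θ2 x y a) x y (φ z) + ρ2 x (φ y) (φ z) - θ2 y z (φ x)
        + Drho (fun x a b => ρ2 x a b) z (φ x) (φ y) - ρ2 y (φ x) (φ z)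
        - Lh.t (φ x) (φ y) (φ z) + φ (Lg.t x y z)) :=
    fun x y z => by have := e1 x y z; simp only at this ⊢; exact sub_eq_iff_eq_add'.mp this
  have E2 : ∀ x y a, θ1 x y a = θ2 x y a +
      (ρ2 x a (φ y) - Drho (fun x a b => ρ2 x a b) y a (φ x) + Lh.t a (φ x) (φ y)) :=
    fun x y a => by have := e2 x y a; simp only at this ⊢; exact sub_eq_iff_eq_add'.mp this
  have E3 : ∀ x a b, ρ1 x a b = ρ2 x a b + Lh.t a (φ x) b :=
    fun x a b => by have := e3 x a b; simp only at this ⊢; exact sub_eq_iff_eq_add'.mp this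
  refine ⟨⟨?_, ?_⟩, ?_, ?_, ?_⟩
  · intro p q h
    simp only [Prod.mk.injEq] at h
    obtain ⟨h1, h2⟩ := h
    rw [h1] at h2
    exact Prod.ext h1 (by rwa [sub_left_inj] at h2)
  · intro q
    exact ⟨(q.1, q.2 + φ q.1), by simp⟩
  · have skew : ∀ a b c : H, Lh.t a b c = - Lh.t b a c := by
      intro a b c
      have h := Lh.alt (a + b) c
      simp only [map_add, LinearMap.add_apply, Lh.alt, zero_add, add_zero] at h
      exact eq_neg_of_add_eq_zero_right h
    intro q r u
    have s1 : Lh.t u.2 (φ r.1) (φ q.1)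
        = Lh.t (φ q.1) (φ r.1) u.2 + Lh.t u.2 (φ q.1) (φ r.1) := by
      have h := Lh.cyc u.2 (φ r.1) (φ q.1)
      rw [skew (φ r.1) (φ q.1) u.2, skew (φ q.1) u.2 (φ r.1)] at h
      have h2 : Lh.t u.2 (φ r.1) (φ q.1)
          - (Lh.t (φ q.1) (φ r.1) u.2 + Lh.t u.2 (φ q.1) (φ r.1)) = 0 := by
        rw [← h]; abel
      exact sub_eq_zero.mp h2
    have s2 : Lh.t r.2 (φ u.1) q.2
        = - Lh.t q.2 r.2 (φ u.1) + Lh.t q.2 (φ u.1) r.2 := by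
      have h := Lh.cyc r.2 (φ u.1) q.2
      rw [skew (φ u.1) q.2 r.2] at h
      have h2 : Lh.t r.2 (φ u.1) q.2
          - (- Lh.t q.2 r.2 (φ u.1) + Lh.t q.2 (φ u.1) r.2) = 0 := by
        rw [← h]; abel
      exact sub_eq_zero.mp h2
    have s3 : Lh.t r.2 (φ q.1) u.2 = - Lh.t (φ q.1) r.2 u.2 := skew _ _ _
    have s4 : Lh.t r.2 (φ q.1) (φ u.1) = - Lh.t (φ q.1) r.2 (φ u.1) := skew _ _ _
    refine Prod.ext rfl ?_
    simp only [nabBr, Dmap, Drho, E1, E2, E3, map_sub, map_add, LinearMap.sub_apply,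
      LinearMap.add_apply, map_neg, LinearMap.neg_apply]
    rw [s1, s2, s4, s3]
    abel
  · intro a; simp
  · intro q; rfl
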